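/- arXiv:2102.10170 — 5 statements merged into one kernel-verified Lean document; each statement's English description precedes it below -/
import Mathlib

section
/- For every nonnegative integer n, the integral over the real line of x^(2n) / (x^2 + 1)^(n+1) dx equals (π / 4^n) * binomial(2n, n). -/
open MeasureTheory Real

lemma wallis_prod_eq (n : ℕ) :
    (∏ i ∈ Finset.range n, (2 * (i : ℝ) + 1) / (2 * i + 2)) =
      (Nat.choose (2 * n) n : ℝ) / 4 ^ n := by
  induction n with
  | zero => simp
  | succ k ih =>
    rw [Finset.prod_range_succ, ih]
    have h := Nat.succ_mul_centralBinom_succ k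
    have h2 : ((k : ℝ) + 1) * (Nat.choose (2 * (k + 1)) (k + 1)) =
        2 * (2 * k + 1) * (Nat.choose (2 * k) k) := by
      have := congrArg (Nat.cast : ℕ → ℝ) h
      push_cast [Nat.centralBinom] at this
      push_cast
      linarith
    have hk : ((k : ℝ) + 1) ≠ 0 := by positivity
    have h4 : (4 : ℝ) ^ k ≠ 0 := by positivity
    field_simp
    linear_combination (-(2:ℝ) * 4 ^ k) * h2

lemma sin_pow_interval (n : ℕ) :
    (∫ x in (-(π/2))..(π/2), Real.sin x ^ (2 * n)) =
      ∫ x in (0:ℝ)..π, Real.sin x ^ (2 * n) := by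
  have h1 : (∫ x in (-(π/2))..(π/2), Real.sin x ^ (2 * n)) =
      ∫ x in (0:ℝ)..π, Real.sin (x + -(π/2)) ^ (2 * n) := by
    rw [intervalIntegral.integral_comp_add_right (fun x => Real.sin x ^ (2*n)) (-(π/2))]
    congr 1 <;> ring
  rw [h1]
  have h2 : (∫ x in (0:ℝ)..π, Real.sin (x + -(π/2)) ^ (2 * n)) =
      ∫ x in (0:ℝ)..π, Real.cos x ^ (2 * n) := by
    apply intervalIntegral.integral_congr
    intro x _
    show Real.sin (x + -(π/2)) ^ (2 * n) = Real.cos x ^ (2 * n)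
    have : Real.sin (x + -(π/2)) = - Real.cos x := by
      rw [show x + -(π/2) = x - π/2 by ring, Real.sin_sub_pi_div_two]
    rw [this, pow_mul, pow_mul, neg_sq]
  rw [h2]
  -- ∫_0^π cos^{2n} = 2 ∫_0^{π/2} cos^{2n} = ∫_0^π sin^{2n}
  have L : IntervalIntegrable (fun x => Real.cos x ^ (2*n)) volume 0 (π/2) :=
    (Real.continuous_cos.pow _).intervalIntegrable _ _
  have R : IntervalIntegrable (fun x => Real.cos x ^ (2*n)) volume (π/2) π :=
    (Real.continuous_cos.pow _).intervalIntegrable _ _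
  rw [← intervalIntegral.integral_add_adjacent_intervals L R]
  have h3 : (∫ x in (π/2)..π, Real.cos x ^ (2 * n)) =
      ∫ x in (0:ℝ)..(π/2), Real.cos x ^ (2 * n) := by
    have := intervalIntegral.integral_comp_sub_left (a := 0) (b := π/2)
      (fun x => Real.cos x ^ (2*n)) π
    rw [show π - (π/2) = π/2 by ring, show π - 0 = π by ring] at this
    rw [← this]
    apply intervalIntegral.integral_congr
    intro x _
    show Real.cos (π - x) ^ (2 * n) = Real.cos x ^ (2 * n)
    rw [Real.cos_pi_sub, pow_mul, pow_mul, neg_sq]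
  have h4 := EulerSine.integral_cos_pow_eq (2*n)
  rw [h3]
  rw [h4]
  ring

theorem stmt0 (n : ℕ) :
    ∫ x : ℝ, x ^ (2 * n) / (x ^ 2 + 1) ^ (n + 1) =
      (π / 4 ^ n) * (Nat.choose (2 * n) n) := by
  have key : (∫ x : ℝ, x ^ (2 * n) / (x ^ 2 + 1) ^ (n + 1)) =
      ∫ x in Set.Ioo (-(π/2)) (π/2),
        |1 / Real.cos x ^ 2| • (Real.tan x ^ (2 * n) / (Real.tan x ^ 2 + 1) ^ (n + 1)) := by
    rw [← setIntegral_univ, ← Real.image_tan_Ioo]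
    exact integral_image_eq_integral_abs_deriv_smul measurableSet_Ioo
      (fun x hx => (Real.hasDerivAt_tan
        (ne_of_gt (Real.cos_pos_of_mem_Ioo hx))).hasDerivWithinAt)
      Real.injOn_tan _
  rw [key]
  have congr1 : (∫ x in Set.Ioo (-(π/2)) (π/2),
      |1 / Real.cos x ^ 2| • (Real.tan x ^ (2 * n) / (Real.tan x ^ 2 + 1) ^ (n + 1))) =
      ∫ x in Set.Ioo (-(π/2)) (π/2), Real.sin x ^ (2 * n) := by
    apply setIntegral_congr_fun measurableSet_Ioo
    intro x hx
    show |1 / Real.cos x ^ 2| • (Real.tan x ^ (2 * n) / (Real.tan x ^ 2 + 1) ^ (n + 1)) =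
      Real.sin x ^ (2 * n)
    have hc : 0 < Real.cos x := Real.cos_pos_of_mem_Ioo hx
    have hc' : Real.cos x ≠ 0 := ne_of_gt hc
    have ht : Real.tan x ^ 2 + 1 = 1 / Real.cos x ^ 2 := by
      have := Real.inv_one_add_tan_sq hc'
      field_simp at this ⊢
      linarith
    have habs : |1 / Real.cos x ^ 2| = 1 / Real.cos x ^ 2 := abs_of_pos (by positivity)
    rw [smul_eq_mul, habs, ht, Real.tan_eq_sin_div_cos, div_pow]
    have hsc : Real.sin x ^ 2 = 1 - Real.cos x ^ 2 := by
      have := Real.sin_sq_add_cos_sq x; linarith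
    field_simp
    ring_nf
    field_simp
    rw [mul_assoc, ← mul_pow, mul_one_div_cancel hc', one_pow, mul_one]
  rw [congr1]
  have h2 : (∫ x in Set.Ioo (-(π/2)) (π/2), Real.sin x ^ (2 * n)) =
      ∫ x in (-(π/2))..(π/2), Real.sin x ^ (2 * n) := by
    rw [intervalIntegral.integral_of_le (by linarith [Real.pi_pos]),
      MeasureTheory.integral_Ioc_eq_integral_Ioo]
  rw [h2, sin_pow_interval, integral_sin_pow_even, wallis_prod_eq]
  ring
end

section
/- For every nonnegative integer n, the sequence I(n) = ∫_{-∞}^{∞} x^(2n)/(x^2+1)^(n+1) dx satisfies the recurrence 2(n+1) I(n+1) = (2n+1) I(n). -/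
open MeasureTheory Filter Real

private lemma denom_pos (x : ℝ) : (0:ℝ) < x ^ 2 + 1 := by positivity

private lemma integrable_f (n : ℕ) :
    Integrable (fun x : ℝ => x ^ (2 * n) / (x ^ 2 + 1) ^ (n + 1)) := by
  have hcont : Continuous (fun x : ℝ => x ^ (2 * n) / (x ^ 2 + 1) ^ (n + 1)) := by
    apply Continuous.div (by continuity) (by continuity)
    intro x; positivity
  refine (integrable_inv_one_add_sq).mono hcont.aestronglyMeasurable ?_
  filter_upwards with x
  have h1 : (0:ℝ) < x ^ 2 + 1 := denom_pos x
  have ha : (0:ℝ) ≤ x ^ (2 * n) / (x ^ 2 + 1) ^ (n + 1) :=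
    div_nonneg (by rw [pow_mul]; positivity) (by positivity)
  have hb : (0:ℝ) ≤ ((1:ℝ) + x ^ 2)⁻¹ := by positivity
  rw [Real.norm_eq_abs, Real.norm_eq_abs, abs_of_nonneg ha, abs_of_nonneg hb]
  rw [div_le_iff₀ (by positivity)]
  have : x ^ (2 * n) ≤ (x ^ 2 + 1) ^ n := by
    rw [pow_mul]
    exact pow_le_pow_left₀ (by positivity) (by linarith) n
  calc x ^ (2 * n) ≤ (x ^ 2 + 1) ^ n := this
    _ = (1 + x ^ 2)⁻¹ * (x ^ 2 + 1) ^ (n + 1) := by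
        rw [add_comm (1:ℝ) (x ^ 2), pow_succ (x ^ 2 + 1) n,
          mul_comm ((x ^ 2 + 1) ^ n), ← mul_assoc, inv_mul_cancel₀ h1.ne', one_mul]

private lemma tendsto_F_zero (n : ℕ) :
    Tendsto (fun x : ℝ => x ^ (2 * n + 1) / (x ^ 2 + 1) ^ (n + 1)) atTop (nhds 0) ∧
    Tendsto (fun x : ℝ => x ^ (2 * n + 1) / (x ^ 2 + 1) ^ (n + 1)) atBot (nhds 0) := by
  have key : ∀ x : ℝ, 1 ≤ |x| →
      ‖x ^ (2 * n + 1) / (x ^ 2 + 1) ^ (n + 1)‖ ≤ |x|⁻¹ := by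
    intro x hx
    have hx0 : (0:ℝ) < |x| := lt_of_lt_of_le one_pos hx
    have h1 : (0:ℝ) < x ^ 2 + 1 := denom_pos x
    rw [norm_div, Real.norm_eq_abs, Real.norm_eq_abs, abs_pow, abs_pow,
      abs_of_nonneg h1.le]
    have hb : (|x| ^ 2) ^ (n + 1) ≤ (x ^ 2 + 1) ^ (n + 1) := by
      apply pow_le_pow_left₀ (by positivity)
      rw [sq_abs]; linarith
    have hbpos : (0:ℝ) < (|x| ^ 2) ^ (n + 1) := by positivity
    calc |x| ^ (2 * n + 1) / (x ^ 2 + 1) ^ (n + 1)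
        ≤ |x| ^ (2 * n + 1) / (|x| ^ 2) ^ (n + 1) :=
          div_le_div_of_nonneg_left (by positivity) hbpos hb
      _ = |x|⁻¹ := by
          rw [← pow_mul]
          have he : |x| ^ (2 * (n + 1)) = |x| ^ (2 * n + 1) * |x| := by ring
          rw [he, div_mul_eq_div_div, div_self (by positivity : (0:ℝ) < _).ne', one_div]
  constructor
  · apply squeeze_zero_norm' (a := fun x : ℝ => |x|⁻¹)
    · filter_upwards [eventually_ge_atTop (1:ℝ)] with x hx
      exact key x (le_trans hx (le_abs_self x))
    · exact tendsto_inv_atTop_zero.comp (tendsto_abs_atTop_atTop)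
  · apply squeeze_zero_norm' (a := fun x : ℝ => |x|⁻¹)
    · filter_upwards [eventually_le_atBot (-1:ℝ)] with x hx
      refine key x ?_
      rw [le_abs]; right; linarith
    · exact tendsto_inv_atTop_zero.comp (tendsto_abs_atBot_atTop)

private lemma hasDeriv_F (n : ℕ) (x : ℝ) :
    HasDerivAt (fun x : ℝ => x ^ (2 * n + 1) / (x ^ 2 + 1) ^ (n + 1))
      ((2 * n + 1 : ℝ) * (x ^ (2 * n) / (x ^ 2 + 1) ^ (n + 1))
        - (2 * (n + 1) : ℝ) * (x ^ (2 * (n + 1)) / (x ^ 2 + 1) ^ ((n + 1) + 1))) x := by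
  have h1 : (0:ℝ) < x ^ 2 + 1 := denom_pos x
  have hp : HasDerivAt (fun x : ℝ => x ^ (2 * n + 1))
      ((2 * n + 1 : ℝ) * x ^ (2 * n)) x := by
    simpa using hasDerivAt_pow (2 * n + 1) x
  have hq : HasDerivAt (fun x : ℝ => (x ^ 2 + 1) ^ (n + 1))
      (((n + 1 : ℝ)) * (x ^ 2 + 1) ^ n * (2 * x)) x := by
    have hb : HasDerivAt (fun x : ℝ => x ^ 2 + 1) (2 * x) x := by
      simpa using (hasDerivAt_pow 2 x).add_const 1
    have := (hasDerivAt_pow (n + 1) (x ^ 2 + 1)).comp x hb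
    simpa [mul_comm, mul_assoc, Function.comp_def] using this
  have := hp.div hq (by positivity)
  convert this using 1
  have h2 : (x ^ 2 + 1) ^ (n + 1) ≠ 0 := by positivity
  have h3 : (x ^ 2 + 1) ^ ((n + 1) + 1) ≠ 0 := by positivity
  case e'_4 => rfl
  case e'_5 => rfl
  case e'_8 => rfl
  field_simp
  ring

theorem stmt1 (I : ℕ → ℝ)
    (hI : ∀ n : ℕ, I n = ∫ x : ℝ, x ^ (2 * n) / (x ^ 2 + 1) ^ (n + 1)) :
    ∀ n : ℕ, 2 * (n + 1 : ℝ) * I (n + 1) = (2 * n + 1 : ℝ) * I n := by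
  intro n
  have hfn := integrable_f n
  have hfn1 := integrable_f (n + 1)
  have hG : Integrable (fun x : ℝ =>
      (2 * n + 1 : ℝ) * (x ^ (2 * n) / (x ^ 2 + 1) ^ (n + 1))
        - (2 * (n + 1) : ℝ) * (x ^ (2 * (n + 1)) / (x ^ 2 + 1) ^ ((n + 1) + 1))) :=
    (hfn.const_mul _).sub (hfn1.const_mul _)
  obtain ⟨htop, hbot⟩ := tendsto_F_zero n
  have hzero : (∫ x : ℝ,
      (2 * n + 1 : ℝ) * (x ^ (2 * n) / (x ^ 2 + 1) ^ (n + 1))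
        - (2 * (n + 1) : ℝ) * (x ^ (2 * (n + 1)) / (x ^ 2 + 1) ^ ((n + 1) + 1))) = 0 - 0 :=
    integral_of_hasDerivAt_of_tendsto (hasDeriv_F n) hG hbot htop
  rw [integral_sub (hfn.const_mul _) (hfn1.const_mul _),
    integral_const_mul, integral_const_mul] at hzero
  rw [hI n, hI (n + 1)]
  push_cast
  push_cast at hzero
  linarith
end

section
/- For every nonnegative integer n, the sum over k from 0 to n of binomial(n,k) * (-1)^k / (n+k+1) equals 1 / ((2n+1) * binomial(2n, n)). -/
open Finset

lemma aux_key (n : ℕ) : ∀ x : ℚ, 0 < x →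
    ∑ k ∈ Finset.range (n + 1), (-1) ^ k * (n.choose k : ℚ) / (x + k) =
      (n.factorial : ℚ) / ∏ k ∈ Finset.range (n + 1), (x + k) := by
  induction n with
  | zero => intro x hx; simp
  | succ n ih =>
    intro x hx
    have hprodpos : ∀ y : ℚ, 0 < y → ∀ m, 0 < ∏ k ∈ Finset.range m, (y + k) := by
      intro y hy m
      apply Finset.prod_pos
      intro i _
      positivity
    have hP : (0:ℚ) < ∏ k ∈ Finset.range (n + 1), (x + k) := hprodpos x hx _
    have hP1 : (0:ℚ) < ∏ k ∈ Finset.range (n + 1), (x + 1 + k) := hprodpos (x+1) (by linarith) _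
    -- split the sum
    have h1 : ∑ k ∈ Finset.range (n + 2), (-1) ^ k * ((n+1).choose k : ℚ) / (x + k)
        = (∑ k ∈ Finset.range (n + 1), (-1) ^ k * (n.choose k : ℚ) / (x + k))
          - ∑ k ∈ Finset.range (n + 1), (-1) ^ k * (n.choose k : ℚ) / (x + 1 + k) := by
      rw [Finset.sum_range_succ' (fun k => (-1) ^ k * ((n+1).choose k : ℚ) / (x + k))]
      have hL : ∑ k ∈ Finset.range (n + 1), (-1) ^ k * (n.choose k : ℚ) / (x + k)
          = ∑ k ∈ Finset.range (n + 2), (-1) ^ k * (n.choose k : ℚ) / (x + k) := by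
        rw [eq_comm, Finset.sum_range_succ]
        simp [Nat.choose_succ_self]
      rw [hL, Finset.sum_range_succ' (fun k => (-1) ^ k * (n.choose k : ℚ) / (x + k))]
      have hterm : ∑ k ∈ Finset.range (n+1), (-1) ^ (k+1) * (((n+1).choose (k+1) : ℕ) : ℚ) / (x + ((k+1 : ℕ) : ℚ))
          = ∑ k ∈ Finset.range (n+1), ((-1) ^ (k+1) * ((n.choose (k+1) : ℕ) : ℚ) / (x + ((k+1 : ℕ) : ℚ))
            - (-1) ^ k * ((n.choose k : ℕ) : ℚ) / (x + 1 + (k : ℚ))) := by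
        apply Finset.sum_congr rfl
        intro i _
        have hc : ((n+1).choose (i+1) : ℚ) = (n.choose i : ℚ) + (n.choose (i+1) : ℚ) := by
          rw [Nat.choose_succ_succ]; push_cast; ring
        rw [hc]
        push_cast
        have : x + 1 + (i:ℚ) ≠ 0 := by positivity
        field_simp
        ring
      rw [hterm, Finset.sum_sub_distrib]
      simp
      ring
    rw [h1, ih x hx, ih (x+1) (by linarith)]
    have hQ1 : ∏ k ∈ Finset.range (n + 2), (x + k)
        = x * ∏ k ∈ Finset.range (n + 1), (x + 1 + k) := by
      rw [Finset.prod_range_succ' (fun k => (x + k))]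
      simp only [Nat.cast_add, Nat.cast_one, Nat.cast_zero, add_zero]
      rw [mul_comm]
      congr 1
      apply Finset.prod_congr rfl
      intro i _
      push_cast; ring
    have hQ2 : ∏ k ∈ Finset.range (n + 2), (x + k)
        = (∏ k ∈ Finset.range (n + 1), (x + k)) * (x + (n+1)) := by
      rw [Finset.prod_range_succ]
      push_cast; ring_nf
    have hfact : ((n+1).factorial : ℚ) = (n+1) * n.factorial := by
      rw [Nat.factorial_succ]; push_cast; ring
    rw [hQ2, hfact]
    have h2 : ∏ k ∈ Finset.range (n + 1), (x + 1 + k)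
        = (∏ k ∈ Finset.range (n + 1), (x + k)) * (x + (n+1)) / x := by
      field_simp
      rw [← hQ2, hQ1]
    rw [h2]
    have hx0 : x ≠ 0 := ne_of_gt hx
    have hxn : x + ((n:ℚ)+1) ≠ 0 := by positivity
    field_simp
    ring

lemma aux_prod (n : ℕ) : ∀ m : ℕ,
    (n.factorial : ℚ) * ∏ k ∈ Finset.range m, ((n:ℚ) + 1 + k) = ((n + m).factorial : ℚ) := by
  intro m
  induction m with
  | zero => simp
  | succ m ih =>
    rw [Finset.prod_range_succ, ← mul_assoc, ih]
    have : (n + (m+1)).factorial = (n + m + 1) * (n + m).factorial := by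
      rw [show n + (m+1) = (n+m) + 1 by ring, Nat.factorial_succ]
    rw [this]
    push_cast; ring

theorem stmt11 (n : ℕ) :
    ∑ k ∈ Finset.range (n + 1), (Nat.choose n k : ℚ) * (-1) ^ k / (n + k + 1) =
      1 / ((2 * n + 1) * Nat.choose (2 * n) n) := by
  have h := aux_key n ((n : ℚ) + 1) (by positivity)
  have hLHS : ∑ k ∈ Finset.range (n + 1), (Nat.choose n k : ℚ) * (-1) ^ k / (n + k + 1)
      = ∑ k ∈ Finset.range (n + 1), (-1) ^ k * (n.choose k : ℚ) / (((n:ℚ)+1) + k) := by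
    apply Finset.sum_congr rfl
    intro i _
    ring_nf
  rw [hLHS, h]
  have hp := aux_prod n (n + 1)
  have hfpos : (0:ℚ) < (n.factorial : ℚ) := by positivity
  have hprodpos : (0:ℚ) < ∏ k ∈ Finset.range (n+1), ((n:ℚ) + 1 + k) := by
    apply Finset.prod_pos; intro i _; positivity
  -- key numeric identity: (2n+1)! = (2n+1) * C(2n,n) * n! * n!
  have hnum : ((n + (n+1)).factorial : ℚ)
      = ((2*n+1 : ℕ) : ℚ) * ((2*n).choose n : ℚ) * (n.factorial : ℚ) * (n.factorial : ℚ) := by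
    have h1 : (2*n).choose n * n.factorial * n.factorial = (2*n).factorial := by
      have := Nat.choose_mul_factorial_mul_factorial (show n ≤ 2*n by omega)
      rw [show 2*n - n = n by omega] at this
      exact this
    have h2 : (n + (n+1)).factorial = (2*n+1) * (2*n).factorial := by
      rw [show n + (n+1) = 2*n + 1 by ring, Nat.factorial_succ]
    rw [h2, ← h1]
    push_cast; ring
  have hcpos : (0:ℚ) < ((2*n).choose n : ℚ) := by
    have := Nat.choose_pos (show n ≤ 2*n by omega)
    exact_mod_cast this
  have h2n1 : (0:ℚ) < ((2*n+1 : ℕ) : ℚ) := by positivity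
  rw [div_eq_div_iff (by positivity) (by push_cast at hcpos ⊢; positivity)]
  refine mul_left_cancel₀ (ne_of_gt hfpos) ?_
  push_cast at hnum hp ⊢
  linear_combination -hp - hnum
end

section
/- The sequence I(n) = ∫_0^1 e^(-x) (x(1-x))^n dx satisfies the recurrence I(n+2) + 2(2n+3)(n+2) I(n+1) - (n+1)(n+2) I(n) = 0 for every nonnegative integer n. -/
theorem stmt13 (I : ℕ → ℝ)
    (hI : ∀ n : ℕ, I n = ∫ x in (0 : ℝ)..1, Real.exp (-x) * (x * (1 - x)) ^ n) :
    ∀ n : ℕ, I (n + 2) + 2 * (2 * n + 3) * (n + 2) * I (n + 1)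
      - (n + 1) * (n + 2) * I n = 0 := by
  intro n
  have hcont : ∀ k : ℕ, Continuous fun x : ℝ => Real.exp (-x) * (x * (1 - x)) ^ k := by
    intro k; fun_prop
  -- the combined integrand
  set g : ℝ → ℝ := fun x => Real.exp (-x) * ((x * (1 - x)) ^ (n + 2)
      + 2 * (2 * (n : ℝ) + 3) * ((n : ℝ) + 2) * (x * (1 - x)) ^ (n + 1)
      - ((n : ℝ) + 1) * ((n : ℝ) + 2) * (x * (1 - x)) ^ n) with hg
  have hgc : Continuous g := by fun_prop
  -- antiderivative
  set F : ℝ → ℝ := fun x => -(Real.exp (-x) *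
      ((x * (1 - x) + ((n : ℝ) + 2) * (1 - 2 * x)) * (x * (1 - x)) ^ (n + 1))) with hF
  have hderiv : ∀ x ∈ Set.uIcc (0 : ℝ) 1, HasDerivAt F (g x) x := by
    intro x _
    have hexp : HasDerivAt (fun x : ℝ => Real.exp (-x)) (Real.exp (-x) * (-1)) x :=
      ((hasDerivAt_id x).neg).exp
    have hu : HasDerivAt (fun x : ℝ => x * (1 - x)) (1 * (1 - x) + x * (0 - 1)) x :=
      (hasDerivAt_id x).mul ((hasDerivAt_const x 1).sub (hasDerivAt_id x))
    have hp : HasDerivAt (fun x : ℝ => (x * (1 - x)) ^ (n + 1))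
        ((n + 1 : ℕ) * (x * (1 - x)) ^ (n + 1 - 1) * (1 * (1 - x) + x * (0 - 1))) x :=
      hu.pow (n + 1)
    have hl : HasDerivAt (fun x : ℝ => x * (1 - x) + ((n : ℝ) + 2) * (1 - 2 * x))
        ((1 * (1 - x) + x * (0 - 1)) + ((n : ℝ) + 2) * (0 - 2 * 1)) x :=
      hu.add ((((hasDerivAt_const x (1:ℝ)).sub ((hasDerivAt_id x).const_mul 2)).const_mul _))
    have h : HasDerivAt F _ x := ((hexp.mul (hl.mul hp)).neg)
    convert h using 1
    simp only [Nat.add_sub_cancel, hg, Pi.mul_apply]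
    push_cast
    rw [show n + 2 = (n + 1) + 1 from rfl, pow_succ, pow_succ]
    ring
  have hF0 : F 0 = 0 := by simp [hF]
  have hF1 : F 1 = 0 := by simp [hF]
  have key : (∫ x in (0:ℝ)..1, g x) = 0 := by
    rw [intervalIntegral.integral_eq_sub_of_hasDerivAt hderiv
      (hgc.intervalIntegrable 0 1), hF0, hF1, sub_zero]
  rw [hI, hI, hI]
  have h2 := (hcont (n+2)).intervalIntegrable (μ := MeasureTheory.volume) (0:ℝ) 1
  have h1 := ((hcont (n+1)).intervalIntegrable (μ := MeasureTheory.volume) (0:ℝ) 1).const_mul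
    (2 * (2 * (n : ℝ) + 3) * ((n : ℝ) + 2))
  have h0 := ((hcont n).intervalIntegrable (μ := MeasureTheory.volume) (0:ℝ) 1).const_mul (((n : ℝ) + 1) * ((n : ℝ) + 2))
  rw [← intervalIntegral.integral_const_mul, ← intervalIntegral.integral_const_mul,
    ← intervalIntegral.integral_add h2 h1, ← intervalIntegral.integral_sub (h2.add h1) h0]
  refine Eq.trans ?_ key
  apply intervalIntegral.integral_congr
  intro x _
  simp only [hg]
  ring
end

section
/- There exist integer sequences a(n) and b(n) such that for every positive integer n, ∫_0^1 e^(-x)(x(1-x))^n dx = a(n) + b(n) * e^(-1), with a(1) = -1, b(1) = 3, a(2) = 14, b(2) = -38, and both a and b satisfy the recurrence c(n+2) = -2(2n+3)(n+2) c(n+1) + (n+1)(n+2) c(n). -/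
open Real intervalIntegral

noncomputable def I (n : ℕ) : ℝ := ∫ x in (0:ℝ)..1, Real.exp (-x) * (x * (1 - x)) ^ n

lemma hexp (x : ℝ) : HasDerivAt (fun t : ℝ => Real.exp (-t)) (-Real.exp (-x)) x := by
  simpa using (hasDerivAt_neg x).exp

lemma hf (x : ℝ) : HasDerivAt (fun t : ℝ => t * (1 - t)) (1 - 2*x) x := by
  have := (hasDerivAt_id x).mul ((hasDerivAt_id x).const_sub 1)
  simp only [id] at this
  exact this.congr_deriv (by ring)

lemma base1 : I 1 = -1 + 3 * Real.exp (-1) := by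
  have hF : ∀ x ∈ Set.uIcc (0:ℝ) 1,
      HasDerivAt (fun t : ℝ => Real.exp (-t) * (t^2 + t + 1))
        (Real.exp (-x) * (x * (1 - x)) ^ 1) x := by
    intro x _
    have h1 : HasDerivAt (fun t : ℝ => t^2 + t + 1) (2*x + 1) x := by
      simpa using ((hasDerivAt_pow 2 x).add (hasDerivAt_id x)).add_const 1
    have := (hexp x).mul h1
    exact this.congr_deriv (by ring)
  have hint : IntervalIntegrable (fun x : ℝ => Real.exp (-x) * (x * (1 - x)) ^ 1)
      MeasureTheory.volume 0 1 := (by fun_prop : Continuous _).intervalIntegrable _ _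
  have := intervalIntegral.integral_eq_sub_of_hasDerivAt hF hint
  rw [I, this]
  simp [Real.exp_neg]
  ring

lemma base2 : I 2 = 14 - 38 * Real.exp (-1) := by
  have hF : ∀ x ∈ Set.uIcc (0:ℝ) 1,
      HasDerivAt (fun t : ℝ => -(Real.exp (-t) * (t^4 + 2*t^3 + 7*t^2 + 14*t + 14)))
        (Real.exp (-x) * (x * (1 - x)) ^ 2) x := by
    intro x _
    have h1 : HasDerivAt (fun t : ℝ => t^4 + 2*t^3 + 7*t^2 + 14*t + 14)
        (4*x^3 + 6*x^2 + 14*x + 14) x := by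
      have := ((((hasDerivAt_pow 4 x).add ((hasDerivAt_pow 3 x).const_mul 2)).add
        ((hasDerivAt_pow 2 x).const_mul 7)).add ((hasDerivAt_id x).const_mul 14)).add_const 14
      exact this.congr_deriv (by ring)
    have := ((hexp x).mul h1).neg
    exact this.congr_deriv (by ring)
  have hint : IntervalIntegrable (fun x : ℝ => Real.exp (-x) * (x * (1 - x)) ^ 2)
      MeasureTheory.volume 0 1 := (by fun_prop : Continuous _).intervalIntegrable _ _
  have := intervalIntegral.integral_eq_sub_of_hasDerivAt hF hint
  rw [I, this]
  simp [Real.exp_neg]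
  ring

lemma Irec (n : ℕ) : I (n+2) = -2*(2*n+3)*(n+2) * I (n+1) + (n+1)*(n+2) * I n := by
  have hF : ∀ x ∈ Set.uIcc (0:ℝ) 1,
      HasDerivAt (fun t : ℝ =>
          -(Real.exp (-t) * ((t*(1-t))^(n+2) + ((n:ℝ)+2) * ((t*(1-t))^(n+1) * (1 - 2*t)))))
        (Real.exp (-x) * ((x*(1-x))^(n+2) + (2*(2*n+3)*(n+2)) * (x*(1-x))^(n+1)
          - ((n+1)*(n+2)) * (x*(1-x))^n)) x := by
    intro x _
    have h2 : HasDerivAt (fun t : ℝ => (t*(1-t))^(n+2))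
        ((n+2) * (x*(1-x))^(n+1) * (1 - 2*x)) x := by
      simpa using (hf x).fun_pow (n+2)
    have h1 : HasDerivAt (fun t : ℝ => (t*(1-t))^(n+1))
        ((n+1) * (x*(1-x))^n * (1 - 2*x)) x := by
      simpa using (hf x).fun_pow (n+1)
    have hlin : HasDerivAt (fun t : ℝ => (1 : ℝ) - 2*t) (-2) x := by
      simpa using ((hasDerivAt_id x).const_mul 2).const_sub 1
    have hmain := ((hexp x).mul (h2.add ((h1.mul hlin).const_mul ((n:ℝ)+2)))).neg
    refine hmain.congr_deriv ?_
    simp only [Pi.add_apply, Pi.mul_apply]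
    have e1 : (x*(1-x))^(n+1) = (x*(1-x))^n * (x*(1-x)) := pow_succ _ _
    have e2 : (x*(1-x))^(n+2) = (x*(1-x))^n * (x*(1-x)) * (x*(1-x)) := by
      rw [pow_succ, pow_succ]
    rw [e1, e2]
    push_cast
    ring
  have hint : IntervalIntegrable (fun x : ℝ =>
      Real.exp (-x) * ((x*(1-x))^(n+2) + (2*(2*n+3)*(n+2)) * (x*(1-x))^(n+1)
        - ((n+1)*(n+2)) * (x*(1-x))^n)) MeasureTheory.volume 0 1 :=
    (by fun_prop : Continuous _).intervalIntegrable _ _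
  have hzero := intervalIntegral.integral_eq_sub_of_hasDerivAt hF hint
  simp at hzero
  have c1 : Continuous fun x : ℝ => Real.exp (-x) * (x*(1-x))^(n+2) := by fun_prop
  have c2 : Continuous fun x : ℝ => Real.exp (-x) * (x*(1-x))^(n+1) := by fun_prop
  have c3 : Continuous fun x : ℝ => Real.exp (-x) * (x*(1-x))^n := by fun_prop
  have split : (∫ x in (0:ℝ)..1, Real.exp (-x) * ((x*(1-x))^(n+2)
        + (2*(2*n+3)*(n+2)) * (x*(1-x))^(n+1) - ((n+1)*(n+2)) * (x*(1-x))^n))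
      = I (n+2) + (2*(2*(n:ℝ)+3)*((n:ℝ)+2)) * I (n+1) - (((n:ℝ)+1)*((n:ℝ)+2)) * I n := by
    rw [I, I, I]
    rw [← intervalIntegral.integral_const_mul, ← intervalIntegral.integral_const_mul,
      ← intervalIntegral.integral_add (c1.intervalIntegrable _ _)
        ((c2.intervalIntegrable _ _).const_mul _),
      ← intervalIntegral.integral_sub
        ((c1.intervalIntegrable _ _).add ((c2.intervalIntegrable _ _).const_mul _))
        ((c3.intervalIntegrable _ _).const_mul _)]
    congr 1
    ext x
    push_cast
    ring
  rw [hzero] at split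
  linarith [split]

def seq (c1 c2 : ℤ) : ℕ → ℤ
  | 0 => 0
  | 1 => c1
  | 2 => c2
  | (n+3) => -2*(2*(n+1)+3)*((n+1)+2) * seq c1 c2 (n+2) + ((n+1)+1)*((n+1)+2) * seq c1 c2 (n+1)

lemma seq_rec (c1 c2 : ℤ) (n : ℕ) : seq c1 c2 (n+3) =
    -2*(2*((n:ℤ)+1)+3)*(((n:ℤ)+1)+2) * seq c1 c2 (n+2)
      + (((n:ℤ)+1)+1)*(((n:ℤ)+1)+2) * seq c1 c2 (n+1) := by
  rw [seq]

theorem stmt15 :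
    ∃ a b : ℕ → ℤ,
      (∀ n : ℕ, 1 ≤ n →
        (∫ x in (0 : ℝ)..1, Real.exp (-x) * (x * (1 - x)) ^ n) =
          (a n : ℝ) + (b n : ℝ) * Real.exp (-1)) ∧
      a 1 = -1 ∧ b 1 = 3 ∧ a 2 = 14 ∧ b 2 = -38 ∧
      (∀ n : ℕ, 1 ≤ n →
        a (n + 2) = -2 * (2 * n + 3) * (n + 2) * a (n + 1) + (n + 1) * (n + 2) * a n) ∧
      (∀ n : ℕ, 1 ≤ n →
        b (n + 2) = -2 * (2 * n + 3) * (n + 2) * b (n + 1) + (n + 1) * (n + 2) * b n) := by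
  refine ⟨seq (-1) 14, seq 3 (-38), ?_, rfl, rfl, rfl, rfl, ?_, ?_⟩
  · -- integral formula
    have key : ∀ n : ℕ, I (n+1) = (seq (-1) 14 (n+1) : ℝ) + (seq 3 (-38) (n+1) : ℝ) * Real.exp (-1)
        ∧ I (n+2) = (seq (-1) 14 (n+2) : ℝ) + (seq 3 (-38) (n+2) : ℝ) * Real.exp (-1) := by
      intro n
      induction n with
      | zero =>
        constructor
        · simpa [seq] using base1
        · simpa [seq, sub_eq_add_neg] using base2
      | succ m ih =>
        refine ⟨ih.2, ?_⟩
        have hI := Irec (m+1)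
        rw [ih.1, ih.2] at hI
        rw [show m+1+2 = m+3 from rfl, hI, seq_rec, seq_rec]
        push_cast
        ring
    intro n hn
    obtain ⟨m, rfl⟩ : ∃ m, n = m + 1 := ⟨n - 1, by omega⟩
    exact (key m).1
  · intro n hn
    obtain ⟨m, rfl⟩ : ∃ m, n = m + 1 := ⟨n - 1, by omega⟩
    rw [show m+1+2 = m+3 from rfl, seq_rec]
    push_cast
    ring
  · intro n hn
    obtain ⟨m, rfl⟩ : ∃ m, n = m + 1 := ⟨n - 1, by omega⟩
    rw [show m+1+2 = m+3 from rfl, seq_rec]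
    push_cast
    ring
end
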